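/- Let a, b ∈ ℝ with a < b. Then the magnitude map on nonempty compact subsets of the interval [a, b], equipped with the Hausdorff metric, is Lipschitz with Lipschitz constant 1 + (b − a)/2; the same holds for the magnitude map on nonempty finite subsets of [a, b]. -/

import Mathlib

open Metric TopologicalSpace Filter Topology Bornology
open scoped ENNReal NNReal

/-- The similarity matrix of a finite subset of a metric space. -/
noncomputable def simMatrix {X : Type*} [MetricSpace X] (s : Finset X) : Matrix s s ℝ :=
  fun i j => Real.exp (-dist (i : X) (j : X))

/-- A metric space is positive definite when every finite subspace has a positive
definite similarity matrix. -/
def IsPosDefSpace (X : Type*) [MetricSpace X] : Prop :=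
  ∀ s : Finset X, (simMatrix s).PosDef

/-- The magnitude of a finite subset of a metric space: the sum of the entries of the
inverse of its similarity matrix. -/
noncomputable def finMag {X : Type*} [MetricSpace X] (s : Finset X) : ℝ :=
  letI : DecidableEq X := Classical.decEq X
  ∑ i, ∑ j, (simMatrix s)⁻¹ i j

/-- The magnitude of a (compact) subset of a metric space, valued in `[0, ∞]`:
the supremum of the magnitudes of its finite subsets. -/
noncomputable def cMagE {X : Type*} [MetricSpace X] (K : Set X) : ℝ≥0∞ :=
  ⨆ (s : Finset X) (_ : (s : Set X) ⊆ K), ENNReal.ofReal (finMag s)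

/-- The real-valued magnitude of a (compact) subset of a metric space. -/
noncomputable def cMag {X : Type*} [MetricSpace X] (K : Set X) : ℝ :=
  (cMagE K).toReal

/-- A metric space is tractable when it is positive definite and all of its closed balls
are compact and of finite magnitude. -/
def Tractable (X : Type*) [MetricSpace X] : Prop :=
  IsPosDefSpace X ∧ (∀ (x : X) (r : ℝ), IsCompact (closedBall x r)) ∧
    ∀ (x : X) (r : ℝ), cMagE (closedBall x r) < ⊤

section MagProof
open Real List



noncomputable def gg (d : ℝ) : ℝ := (1 - Real.exp (-d)) / (1 + Real.exp (-d))

lemma gden_pos (d : ℝ) : 0 < 1 + Real.exp (-d) := by positivity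

lemma gg_zero : gg 0 = 0 := by simp [gg]

lemma gg_nonneg {d : ℝ} (hd : 0 ≤ d) : 0 ≤ gg d := by
  have h1 : Real.exp (-d) ≤ 1 := Real.exp_le_one_iff.mpr (by linarith)
  have := gden_pos d
  unfold gg
  apply div_nonneg (by linarith) (by linarith)

lemma gg_le_one (d : ℝ) : gg d ≤ 1 := by
  have h := (Real.exp_pos (-d)).le
  have := gden_pos d
  rw [gg, div_le_one this]
  linarith

lemma gg_mono : Monotone gg := by
  intro d d' hdd
  have h1 : Real.exp (-d') ≤ Real.exp (-d) := Real.exp_le_exp.mpr (by linarith)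
  have h2 := gden_pos d
  have h3 := gden_pos d'
  rw [gg, gg, div_le_div_iff₀ h2 h3]
  nlinarith

lemma gg_hasDeriv (d : ℝ) :
    HasDerivAt gg (2 * Real.exp (-d) / (1 + Real.exp (-d)) ^ 2) d := by
  have h0 : HasDerivAt (fun t : ℝ => -t) (-1) d := hasDerivAt_neg d
  have h1 : HasDerivAt (fun t : ℝ => Real.exp (-t)) (Real.exp (-d) * (-1)) d :=
    (Real.hasDerivAt_exp (-d)).comp d h0
  have hnum : HasDerivAt (fun t : ℝ => 1 - Real.exp (-t)) (-(Real.exp (-d) * (-1))) d :=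
    h1.const_sub 1
  have hden : HasDerivAt (fun t : ℝ => 1 + Real.exp (-t)) (Real.exp (-d) * (-1)) d :=
    h1.const_add 1
  have h2 := hnum.div hden (gden_pos d).ne'
  have h3 : HasDerivAt gg _ d := h2
  refine h3.congr_deriv ?_
  rw [div_left_inj' (by positivity)]
  ring

lemma one_sub_gg_sq (d : ℝ) :
    1 - gg d ^ 2 = 4 * Real.exp (-d) / (1 + Real.exp (-d)) ^ 2 := by
  have := (gden_pos d).ne'
  rw [gg]
  field_simp
  ring

lemma gg_le_half {d : ℝ} (hd : 0 ≤ d) : gg d ≤ d / 2 := by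
  have hD : ∀ t : ℝ, HasDerivAt (fun t : ℝ => t / 2 - gg t)
      (1 / 2 - 2 * Real.exp (-t) / (1 + Real.exp (-t)) ^ 2) t := by
    intro t
    have h1 : HasDerivAt (fun t : ℝ => t / 2) (1 / 2) t := by
      simpa using (hasDerivAt_id t).div_const 2
    exact h1.sub (gg_hasDeriv t)
  have hmono : Monotone (fun t : ℝ => t / 2 - gg t) := by
    apply monotone_of_deriv_nonneg
    · intro t
      exact (hD t).differentiableAt
    · intro t
      rw [(hD t).deriv]
      have he := Real.exp_pos (-t)
      have hd2 := gden_pos t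
      rw [sub_nonneg, div_le_div_iff₀ (by positivity) (by norm_num : (0:ℝ) < 2)]
      nlinarith [sq_nonneg (1 - Real.exp (-t))]
  have := hmono hd
  simp [gg_zero] at this
  linarith

lemma gg_ge {d : ℝ} (hd : 0 ≤ d) : d / (2 + d) ≤ gg d := by
  have h1 : Real.exp (-d) * (1 + d) ≤ 1 := by
    have := Real.add_one_le_exp d
    have he := Real.exp_pos d
    have : (1 + d) ≤ Real.exp d := by linarith
    calc Real.exp (-d) * (1 + d) ≤ Real.exp (-d) * Real.exp d := by
          apply mul_le_mul_of_nonneg_left this (Real.exp_pos (-d)).le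
      _ = 1 := by rw [← Real.exp_add]; simp
  have h2 := gden_pos d
  have h3 : (0:ℝ) < 2 + d := by linarith
  rw [gg, div_le_div_iff₀ h3 h2]
  nlinarith [Real.exp_pos (-d)]

lemma gg_subadd {a b : ℝ} (ha : 0 ≤ a) (hb : 0 ≤ b) : gg (a + b) ≤ gg a + gg b := by
  set u := Real.exp (-a) with hu
  set v := Real.exp (-b) with hv
  have huv : Real.exp (-(a+b)) = u * v := by rw [hu, hv, ← Real.exp_add]; ring_nf
  have hu1 : u ≤ 1 := Real.exp_le_one_iff.mpr (by linarith)
  have hv1 : v ≤ 1 := Real.exp_le_one_iff.mpr (by linarith)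
  have hu0 : 0 < u := Real.exp_pos _
  have hv0 : 0 < v := Real.exp_pos _
  have h1 : (0:ℝ) < 1 + u := by linarith
  have h2 : (0:ℝ) < 1 + v := by linarith
  have h3 : (0:ℝ) < 1 + u * v := by positivity
  rw [gg, gg, gg, huv, div_add_div _ _ (by linarith) (by linarith), div_le_div_iff₀ h3 (by positivity)]
  nlinarith [mul_nonneg (mul_nonneg (sub_nonneg.mpr hu1) (sub_nonneg.mpr hv1)) (sub_nonneg.mpr (by nlinarith : u*v ≤ 1)), mul_pos h1 h2]

lemma gg_key {s h : ℝ} (hs : 0 ≤ s) (h2s : 2 * s ≤ h) :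
    s * (1 - gg h ^ 2) ≤ gg h - gg (h - 2 * s) := by
  set Φ : ℝ → ℝ := fun t => gg h - gg (h - 2 * t) - t * (1 - gg h ^ 2) with hPhi
  have hderiv : ∀ t : ℝ, HasDerivAt Φ (gg h ^ 2 - gg (h - 2*t) ^ 2) t := by
    intro t
    have hin : HasDerivAt (fun t : ℝ => h - 2 * t) (-2) t := by
      simpa using ((hasDerivAt_id t).const_mul 2).const_sub h
    have hcomp : HasDerivAt (fun t : ℝ => gg (h - 2 * t))
        ((2 * Real.exp (-(h - 2*t)) / (1 + Real.exp (-(h - 2*t))) ^ 2) * (-2)) t :=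
      by have := (gg_hasDeriv (h - 2*t)).comp t hin; exact this
    have hlin : HasDerivAt (fun t : ℝ => t * (1 - gg h ^ 2)) (1 - gg h ^ 2) t := by
      simpa using (hasDerivAt_id t).mul_const (1 - gg h ^ 2)
    have h3 := (hcomp.const_sub (gg h)).sub hlin
    refine HasDerivAt.congr_deriv h3 ?_
    have h4 := one_sub_gg_sq (h - 2*t)
    linear_combination -h4
  have hmono : MonotoneOn Φ (Set.Icc 0 (h/2)) := by
    apply monotoneOn_of_deriv_nonneg (convex_Icc _ _)
    · exact fun t _ => (hderiv t).differentiableAt.continuousAt.continuousWithinAt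
    · exact fun t _ => (hderiv t).differentiableAt.differentiableWithinAt
    · intro t ht
      rw [interior_Icc] at ht
      rw [(hderiv t).deriv]
      have h1 : 0 ≤ h - 2 * t := by rcases ht with ⟨h1, h2⟩; linarith
      have h2 : h - 2 * t ≤ h := by rcases ht with ⟨h1', h2'⟩; linarith
      have h3 : gg (h - 2*t) ≤ gg h := gg_mono h2
      have h4 : 0 ≤ gg (h - 2*t) := gg_nonneg h1
      nlinarith
  have h0 : (0:ℝ) ∈ Set.Icc (0:ℝ) (h/2) := by constructor <;> linarith
  have hsmem : s ∈ Set.Icc (0:ℝ) (h/2) := by constructor <;> linarith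
  have := hmono h0 hsmem hs
  simp only [hPhi] at this
  simp at this
  linarith [this]

lemma gg_G6 {s h ε : ℝ} (hs : 0 ≤ s) (hse : s ≤ ε) (h2s : 2 * s ≤ h) :
    s + gg (h - 2 * s) ≤ (1 + ε) * gg h := by
  have hk := gg_key hs h2s
  have h1 : 0 ≤ gg h := gg_nonneg (by linarith)
  have h2 : gg h ≤ 1 := gg_le_one h
  have hε : 0 ≤ ε := le_trans hs hse
  have hsq : gg h ^ 2 ≤ gg h := by nlinarith
  have h3 : s * gg h ^ 2 ≤ ε * gg h :=
    mul_le_mul hse hsq (by positivity) hε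
  nlinarith

noncomputable def sumGaps : List ℝ → ℝ
  | a :: b :: t => gg (b - a) + sumGaps (b :: t)
  | _ => 0

@[simp] lemma sumGaps_nil : sumGaps [] = 0 := rfl
@[simp] lemma sumGaps_single (a : ℝ) : sumGaps [a] = 0 := rfl
@[simp] lemma sumGaps_cons_cons (a b : ℝ) (t : List ℝ) :
    sumGaps (a :: b :: t) = gg (b - a) + sumGaps (b :: t) := rfl

lemma sorted_head_le {a x : ℝ} {l : List ℝ} (h : (a :: l).Pairwise (· < ·))
    (hx : x ∈ a :: l) : a ≤ x := by
  rcases List.mem_cons.mp hx with rfl | hx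
  · exact le_rfl
  · exact ((List.pairwise_cons.mp h).1 x hx).le

lemma sorted_le_getLast : ∀ (l : List ℝ) (h : l ≠ []), l.Pairwise (· < ·) →
    ∀ x ∈ l, x ≤ l.getLast h
  | [], h, _, _, hx => absurd rfl h
  | [a], _, _, x, hx => by simp at hx; simp [hx]
  | a :: b :: t, _, hs, x, hx => by
    rw [List.getLast_cons (by simp)]
    rcases List.mem_cons.mp hx with rfl | hx
    · calc x ≤ b := ((List.pairwise_cons.mp hs).1 b (by simp)).le
        _ ≤ (b :: t).getLast (by simp) :=
          sorted_le_getLast (b :: t) (by simp) (List.pairwise_cons.mp hs).2 b (by simp)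
    · exact sorted_le_getLast (b :: t) (by simp) (List.pairwise_cons.mp hs).2 x hx

lemma sumGaps_nonneg : ∀ {l : List ℝ}, l.Pairwise (· < ·) → 0 ≤ sumGaps l
  | [], _ => le_refl 0
  | [a], _ => le_refl 0
  | a :: b :: t, hs => by
    have h1 := (List.pairwise_cons.mp hs).1 b (by simp)
    have h2 := sumGaps_nonneg (List.pairwise_cons.mp hs).2
    have h3 : 0 ≤ gg (b - a) := gg_nonneg (by linarith)
    simp only [sumGaps_cons_cons]; linarith

lemma sumGaps_le_half : ∀ (l : List ℝ) (a M : ℝ), (a :: l).Pairwise (· < ·) →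
    (∀ x ∈ a :: l, x ≤ M) → sumGaps (a :: l) ≤ (M - a) / 2
  | [], a, M, _, hM => by
    have := hM a (by simp); simp; linarith
  | b :: t, a, M, hs, hM => by
    have h1 := (List.pairwise_cons.mp hs).1 b (by simp)
    have h2 := sumGaps_le_half t b M (List.pairwise_cons.mp hs).2
      (fun x hx => hM x (by simp [hx]))
    have h3 : gg (b - a) ≤ (b - a) / 2 := gg_le_half (by linarith)
    simp only [sumGaps_cons_cons]
    linarith

lemma sumGaps_cons_le {b : ℝ} {m : List ℝ} (h : (b :: m).Pairwise (· < ·)) :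
    sumGaps m ≤ sumGaps (b :: m) := by
  cases m with
  | nil => simp
  | cons d m' =>
    have h1 := (List.pairwise_cons.mp h).1 d (by simp)
    have : 0 ≤ gg (d - b) := gg_nonneg (by linarith)
    simp only [sumGaps_cons_cons]; linarith

lemma sumGaps_subset_cons : ∀ (m : List ℝ), ∀ (l : List ℝ) (c : ℝ),
    (c :: m).Pairwise (· < ·) → (c :: l).Pairwise (· < ·) → (∀ x ∈ l, x ∈ m) →
    sumGaps (c :: l) ≤ sumGaps (c :: m)
  | m, [], c, hm, _, _ => by
    simpa using sumGaps_nonneg hm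
  | [], a :: l', c, _, _, hsub => absurd (hsub a (by simp)) (by simp)
  | b :: m', a :: l', c, hm, hl, hsub => by
    have ham : a ∈ b :: m' := hsub a (by simp)
    have hcb : c < b := (List.pairwise_cons.mp hm).1 b (by simp)
    have hca : c < a := (List.pairwise_cons.mp hl).1 a (by simp)
    rcases List.mem_cons.mp ham with rfl | ham'
    · -- a = b
      have hsub' : ∀ x ∈ l', x ∈ m' := by
        intro x hx
        have hxm : x ∈ a :: m' := hsub x (by simp [hx])
        have hax : a < x := (List.pairwise_cons.mp (List.pairwise_cons.mp hl).2).1 x hx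
        rcases List.mem_cons.mp hxm with heq | h
        · exact absurd hax (by rw [heq]; exact lt_irrefl a)
        · exact h
      have := sumGaps_subset_cons m' l' a (List.pairwise_cons.mp hm).2
        (List.pairwise_cons.mp hl).2 hsub'
      simp only [sumGaps_cons_cons]
      linarith
    · -- a ∈ m', so a > b, and l ⊆ m'
      have hba : b < a := by
        have := (List.pairwise_cons.mp (List.pairwise_cons.mp hm).2).1 a ham'; exact this
      have hsub' : ∀ x ∈ a :: l', x ∈ m' := by
        intro x hx
        have hxm : x ∈ b :: m' := hsub x hx
        have hax : a ≤ x := sorted_head_le (List.pairwise_cons.mp hl).2 hx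
        rcases List.mem_cons.mp hxm with rfl | h
        · exact absurd (lt_of_lt_of_le hba hax) (lt_irrefl x)
        · exact h
      have hsm' : (c :: m').Pairwise (· < ·) := by
        rw [List.pairwise_cons] at hm ⊢
        refine ⟨fun x hx => ?_, (List.pairwise_cons.mp hm.2).2⟩
        exact hm.1 x (by simp [hx])
      have h1 := sumGaps_subset_cons m' (a :: l') c hsm' hl hsub'
      -- sumGaps (c :: m') ≤ sumGaps (c :: b :: m') by subadditivity
      have h2 : sumGaps (c :: m') ≤ sumGaps (c :: b :: m') := by
        cases m' with
        | nil =>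
          have : 0 ≤ gg (b - c) := gg_nonneg (by linarith)
          simp; linarith
        | cons d m'' =>
          have hbd : b < d := (List.pairwise_cons.mp (List.pairwise_cons.mp hm).2).1 d (by simp)
          have hsa : gg (d - c) ≤ gg (b - c) + gg (d - b) := by
            have := gg_subadd (le_of_lt (by linarith : (0:ℝ) < b - c))
              (le_of_lt (by linarith : (0:ℝ) < d - b))
            calc gg (d - c) = gg ((b - c) + (d - b)) := by ring_nf
              _ ≤ gg (b - c) + gg (d - b) := this
          simp only [sumGaps_cons_cons]
          linarith
      linarith

lemma sumGaps_mono : ∀ (m l : List ℝ), m.Pairwise (· < ·) → l.Pairwise (· < ·) →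
    (∀ x ∈ l, x ∈ m) → sumGaps l ≤ sumGaps m
  | m, [], hm, _, _ => sumGaps_nonneg hm
  | [], a :: l', _, _, hsub => absurd (hsub a (by simp)) (by simp)
  | b :: m', a :: l', hm, hl, hsub => by
    have ham : a ∈ b :: m' := hsub a (by simp)
    rcases List.mem_cons.mp ham with rfl | ham'
    · have hsub' : ∀ x ∈ l', x ∈ m' := by
        intro x hx
        have hxm : x ∈ a :: m' := hsub x (by simp [hx])
        have hax : a < x := (List.pairwise_cons.mp hl).1 x hx
        rcases List.mem_cons.mp hxm with heq | h
        · exact absurd hax (by rw [heq]; exact lt_irrefl a)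
        · exact h
      exact sumGaps_subset_cons m' l' a hm hl hsub'
    · have hba : b < a := (List.pairwise_cons.mp hm).1 a ham'
      have hsub' : ∀ x ∈ a :: l', x ∈ m' := by
        intro x hx
        have hxm : x ∈ b :: m' := hsub x hx
        have hax : a ≤ x := sorted_head_le hl hx
        rcases List.mem_cons.mp hxm with rfl | h
        · exact absurd (lt_of_lt_of_le hba hax) (lt_irrefl x)
        · exact h
      have h1 := sumGaps_mono m' (a :: l') (List.pairwise_cons.mp hm).2 hl hsub'
      have h2 := sumGaps_cons_le hm
      linarith

lemma sumGaps_split : ∀ (A : List ℝ) (a c : ℝ) (B : List ℝ),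
    sumGaps (a :: (A ++ c :: B)) = sumGaps (a :: (A ++ [c])) + sumGaps (c :: B)
  | [], a, c, B => by simp
  | a' :: A', a, c, B => by
    simp only [List.cons_append, sumGaps_cons_cons]
    rw [sumGaps_split A' a' c B]
    ring

lemma sumGaps_bridge : ∀ (A : List ℝ) (a b : ℝ) (B : List ℝ),
    sumGaps ((a :: A) ++ b :: B) =
      sumGaps (a :: A) + gg (b - (a :: A).getLast (by simp)) + sumGaps (b :: B)
  | [], a, b, B => by simp
  | a' :: A', a, b, B => by
    simp only [List.cons_append, sumGaps_cons_cons]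
    have := sumGaps_bridge A' a' b B
    simp only [List.cons_append] at this
    rw [this]
    rw [List.getLast_cons (by simp : a' :: A' ≠ [])]
    ring

lemma sorted_of_sublist {l m : List ℝ} (h : l.Sublist m) (hm : m.Pairwise (· < ·)) :
    l.Pairwise (· < ·) := List.Pairwise.sublist h hm

lemma dropWhile_head_not (p : ℝ → Bool) : ∀ (l : List ℝ) (hb : ℝ) (B' : List ℝ),
    l.dropWhile p = hb :: B' → p hb = false := by
  intro l
  induction l with
  | nil => simp [List.dropWhile]
  | cons a t ih =>
    intro hb B' h
    by_cases hpa : p a = true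
    · rw [List.dropWhile_cons_of_pos hpa] at h; exact ih _ _ h
    · rw [List.dropWhile_cons_of_neg hpa] at h
      cases h; simpa using hpa

lemma piece (S : List ℝ) (y q ε : ℝ) (hε : 0 ≤ ε)
    (hs : (y :: S).Pairwise (· < ·))
    (hq : ∀ x ∈ y :: S, x ≤ q) (hqm : q ∈ y :: S)
    (happ : ∀ x ∈ y :: S, x - y ≤ ε ∨ q - x ≤ ε) :
    sumGaps (y :: S) ≤ (1 + ε) * gg (q - y) := by
  have hyq : y ≤ q := hq y (by simp)
  set p : ℝ → Bool := fun x => decide (x ≤ y + ε) with hp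
  set A' : List ℝ := S.takeWhile p with hA'
  set B : List ℝ := S.dropWhile p with hB
  have hAB : y :: (A' ++ B) = y :: S := by
    rw [hA', hB, List.takeWhile_append_dropWhile]
  have hA'le : ∀ x ∈ A', x ≤ y + ε := by
    intro x hx
    have := List.mem_takeWhile_imp (hA' ▸ hx)
    simpa [hp] using this
  have hBsub : B.Sublist S := hB ▸ List.dropWhile_sublist _
  have hSsorted : S.Pairwise (· < ·) := (List.pairwise_cons.mp hs).2
  have hBsorted : B.Pairwise (· < ·) := sorted_of_sublist hBsub hSsorted
  have hBmem : ∀ x ∈ B, x ∈ y :: S := fun x hx => by simp [hBsub.subset hx]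
  cases hBe : B with
  | nil =>
    have hqe : q ≤ y + ε := by
      rcases List.mem_cons.mp hqm with rfl | hqS
      · linarith
      · have : q ∈ A' ++ B := by
          rw [hA', hB, List.takeWhile_append_dropWhile]; exact hqS
        rw [hBe, List.append_nil] at this
        exact hA'le q this
    have h1 : sumGaps (y :: S) ≤ (q - y) / 2 := sumGaps_le_half S y q hs hq
    have hd0 : 0 ≤ q - y := by linarith
    have h2 : (q - y) / (2 + (q - y)) ≤ gg (q - y) := gg_ge hd0
    have h3 : (q - y) / 2 ≤ (1 + ε) * ((q - y) / (2 + (q - y))) := by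
      rw [← mul_div_assoc, div_le_div_iff₀ (by norm_num : (0:ℝ) < 2)
        (by linarith : (0:ℝ) < 2 + (q - y))]
      nlinarith
    have h4 : (1 + ε) * ((q - y) / (2 + (q - y))) ≤ (1 + ε) * gg (q - y) :=
      mul_le_mul_of_nonneg_left h2 (by linarith)
    linarith
  | cons hb B' =>
    have hhbp : p hb = false := dropWhile_head_not p S hb B' (hB.symm.trans hBe)
    have hhb' : y + ε < hb := by simpa [hp] using hhbp
    set lA := (y :: A').getLast (by simp) with hlA
    have hAsorted : (y :: A').Pairwise (· < ·) := by
      rw [List.pairwise_cons]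
      refine ⟨fun x hx => ?_, sorted_of_sublist (hA' ▸ List.takeWhile_sublist _) hSsorted⟩
      exact (List.pairwise_cons.mp hs).1 x ((List.takeWhile_sublist _).subset (hA' ▸ hx))
    have hlAmem : lA ∈ y :: A' := List.getLast_mem _
    have hlAle : lA ≤ y + ε := by
      rcases List.mem_cons.mp hlAmem with h | h
      · rw [h]; linarith
      · exact hA'le lA h
    have hylA : y ≤ lA := sorted_head_le hAsorted hlAmem
    have hAmax : ∀ x ∈ y :: A', x ≤ lA := sorted_le_getLast _ (by simp) hAsorted
    have hbmem : hb ∈ y :: S := hBmem hb (by rw [hBe]; simp)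
    have hbq : hb ≤ q := hq hb hbmem
    have hRe : q - hb ≤ ε := by
      rcases happ hb hbmem with h | h
      · linarith
      · exact h
    have hBle : ∀ x ∈ hb :: B', x ≤ q := fun x hx => hq x (hBmem x (hBe ▸ hx))
    have hBsorted' : (hb :: B').Pairwise (· < ·) := hBe ▸ hBsorted
    have hsumB : sumGaps (hb :: B') ≤ (q - hb) / 2 :=
      sumGaps_le_half B' hb q hBsorted' hBle
    have hsumA : sumGaps (y :: A') ≤ (lA - y) / 2 :=
      sumGaps_le_half A' y lA hAsorted hAmax
    have hbr : sumGaps (y :: S) = sumGaps (y :: A') + gg (hb - lA) + sumGaps (hb :: B') := by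
      conv_lhs => rw [← hAB, hBe]
      rw [show y :: (A' ++ hb :: B') = (y :: A') ++ hb :: B' by simp]
      exact sumGaps_bridge A' y hb B'
    set Λ := lA - y with hΛ
    set R := q - hb with hR'
    set sv := (Λ + R) / 2 with hsv
    have hsv0 : 0 ≤ sv := by rw [hsv]; rw [hΛ] at *; rw [hR'] at *
                            ; linarith
    have hsvε : sv ≤ ε := by rw [hsv]; linarith
    have h2s : 2 * sv ≤ q - y := by rw [hsv]; rw [hΛ, hR']; linarith
    have hG6 := gg_G6 hsv0 hsvε h2s
    have harg : hb - lA = (q - y) - 2 * sv := by rw [hsv, hΛ, hR']; ring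
    rw [hbr, harg]
    linarith

lemma aux_right : ∀ (Gl : List ℝ), ∀ (Hl : List ℝ) (y ε : ℝ), 0 ≤ ε →
    (y :: Hl).Pairwise (· < ·) → (y :: Gl).Pairwise (· < ·) →
    (∀ z ∈ Gl, z ∈ Hl) →
    (∀ x ∈ y :: Hl, ∃ u ∈ y :: Gl, |x - u| ≤ ε) →
    sumGaps (y :: Hl) ≤ ε / 2 + (1 + ε) * sumGaps (y :: Gl)
  | [], Hl, y, ε, hε, hsH, _, _, happ => by
    have hM : ∀ x ∈ y :: Hl, x ≤ y + ε := by
      intro x hx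
      obtain ⟨u, hu, hxu⟩ := happ x hx
      simp at hu
      rw [hu] at hxu
      have := abs_le.mp hxu
      linarith [this.2]
    have := sumGaps_le_half Hl y (y + ε) hsH hM
    simpa using by linarith
  | y₁ :: G', Hl, y, ε, hε, hsH, hsG, hsub, happ => by
    have hyy₁ : y < y₁ := (List.pairwise_cons.mp hsG).1 y₁ (by simp)
    have hy₁H : y₁ ∈ Hl := hsub y₁ (by simp)
    obtain ⟨P, Q, hPQ⟩ := List.append_of_mem hy₁H
    subst hPQ
    have hsH' : ((y :: P) ++ y₁ :: Q).Pairwise (· < ·) := by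
      simpa using hsH
    have hsplit := (List.pairwise_append.mp hsH')
    have hsyP : (y :: P).Pairwise (· < ·) := hsplit.1
    have hsy₁Q : (y₁ :: Q).Pairwise (· < ·) := hsplit.2.1
    have hcross : ∀ u ∈ y :: P, ∀ v ∈ y₁ :: Q, u < v := hsplit.2.2
    have hsG' : (y₁ :: G').Pairwise (· < ·) := (List.pairwise_cons.mp hsG).2
    -- left piece (y :: P ++ [y₁])
    have hsL : (y :: (P ++ [y₁])).Pairwise (· < ·) := by
      rw [show y :: (P ++ [y₁]) = (y :: P) ++ [y₁] by simp]
      exact List.pairwise_append.mpr ⟨hsyP, List.pairwise_singleton _ _,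
        fun u hu v hv => by simp at hv; subst hv; exact hcross u hu v (by simp)⟩
    have hLmem : ∀ x ∈ y :: (P ++ [y₁]), x ∈ y :: (P ++ y₁ :: Q) := by
      intro x hx
      rcases List.mem_cons.mp hx with rfl | hx
      · simp
      · rcases List.mem_append.mp hx with h | h
        · simp [h]
        · simp at h; subst h; simp
    have hLle : ∀ x ∈ y :: (P ++ [y₁]), x ≤ y₁ := by
      intro x hx
      rcases List.mem_cons.mp hx with rfl | hx
      · exact hyy₁.le
      · rcases List.mem_append.mp hx with h | h
        · exact (hcross x (by simp [h]) y₁ (by simp)).le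
        · simp at h; subst h; exact le_rfl
    have hLapp : ∀ x ∈ y :: (P ++ [y₁]), x - y ≤ ε ∨ y₁ - x ≤ ε := by
      intro x hx
      obtain ⟨u, hu, hxu⟩ := happ x (hLmem x hx)
      have hyx : y ≤ x := sorted_head_le hsL hx
      rcases List.mem_cons.mp hu with rfl | hu'
      · left; have := abs_le.mp hxu; linarith [this.2]
      · right
        have hy₁u : y₁ ≤ u := sorted_head_le hsG' hu'
        have hxy₁ : x ≤ y₁ := hLle x hx
        have := abs_le.mp hxu
        linarith [this.1]
    have hpiece := piece (P ++ [y₁]) y y₁ ε hε hsL hLle (by simp) hLapp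
    -- right piece via IH
    have hsubQ : ∀ z ∈ G', z ∈ Q := by
      intro z hz
      have hzH : z ∈ P ++ y₁ :: Q := hsub z (by simp [hz])
      have hy₁z : y₁ < z := (List.pairwise_cons.mp hsG').1 z hz
      rcases List.mem_append.mp hzH with h | h
      · exact absurd (hcross z (by simp [h]) y₁ (by simp)) (by push_neg; linarith)
      · rcases List.mem_cons.mp h with rfl | h
        · exact absurd hy₁z (lt_irrefl z)
        · exact h
    have happQ : ∀ x ∈ y₁ :: Q, ∃ u ∈ y₁ :: G', |x - u| ≤ ε := by
      intro x hx
      have hxH : x ∈ y :: (P ++ y₁ :: Q) := by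
        rcases List.mem_cons.mp hx with rfl | hx
        · simp
        · simp [hx]
      obtain ⟨u, hu, hxu⟩ := happ x hxH
      have hy₁x : y₁ ≤ x := sorted_head_le hsy₁Q hx
      rcases List.mem_cons.mp hu with rfl | hu'
      · refine ⟨y₁, by simp, ?_⟩
        have := abs_le.mp hxu
        rw [abs_le]
        constructor <;> linarith [this.1, this.2]
      · exact ⟨u, hu', hxu⟩
    have hIH := aux_right G' Q y₁ ε hε hsy₁Q hsG' hsubQ happQ
    -- combine
    have hsplit2 : sumGaps (y :: (P ++ y₁ :: Q)) =
        sumGaps (y :: (P ++ [y₁])) + sumGaps (y₁ :: Q) := sumGaps_split P y y₁ Q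
    have hGdef : sumGaps (y :: y₁ :: G') = gg (y₁ - y) + sumGaps (y₁ :: G') := rfl
    have hggnn : 0 ≤ gg (y₁ - y) := gg_nonneg (by linarith)
    have hsgnn : 0 ≤ sumGaps (y₁ :: G') := sumGaps_nonneg hsG'
    calc sumGaps (y :: (P ++ y₁ :: Q))
        = sumGaps (y :: (P ++ [y₁])) + sumGaps (y₁ :: Q) := hsplit2
      _ ≤ (1 + ε) * gg (y₁ - y) + (ε / 2 + (1 + ε) * sumGaps (y₁ :: G')) := by linarith
      _ = ε / 2 + (1 + ε) * sumGaps (y :: y₁ :: G') := by rw [hGdef]; ring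

lemma main_ineq (Gl Hl : List ℝ) (ε : ℝ) (hε : 0 ≤ ε)
    (hsH : Hl.Pairwise (· < ·)) (hsG : Gl.Pairwise (· < ·)) (hGne : Gl ≠ [])
    (hsub : ∀ z ∈ Gl, z ∈ Hl)
    (happ : ∀ x ∈ Hl, ∃ u ∈ Gl, |x - u| ≤ ε) :
    sumGaps Hl ≤ ε + (1 + ε) * sumGaps Gl := by
  obtain ⟨y₀, G', rfl⟩ : ∃ y₀ G', Gl = y₀ :: G' := by
    cases Gl with
    | nil => exact absurd rfl hGne
    | cons a t => exact ⟨a, t, rfl⟩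
  have hy₀H : y₀ ∈ Hl := hsub y₀ (by simp)
  obtain ⟨P, Q, hPQ⟩ := List.append_of_mem hy₀H
  subst hPQ
  have hsplitPQ := List.pairwise_append.mp (show (P ++ y₀ :: Q).Pairwise (· < ·) from hsH)
  have hsP : P.Pairwise (· < ·) := hsplitPQ.1
  have hsy₀Q : (y₀ :: Q).Pairwise (· < ·) := hsplitPQ.2.1
  have hcross : ∀ u ∈ P, ∀ v ∈ y₀ :: Q, u < v := hsplitPQ.2.2
  -- right side estimate by aux_right
  have hsubQ : ∀ z ∈ G', z ∈ Q := by
    intro z hz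
    have hzH : z ∈ P ++ y₀ :: Q := hsub z (by simp [hz])
    have hy₀z : y₀ < z := (List.pairwise_cons.mp hsG).1 z hz
    rcases List.mem_append.mp hzH with h | h
    · exact absurd (hcross z h y₀ (by simp)) (by push_neg; linarith)
    · rcases List.mem_cons.mp h with rfl | h
      · exact absurd hy₀z (lt_irrefl z)
      · exact h
  have happQ : ∀ x ∈ y₀ :: Q, ∃ u ∈ y₀ :: G', |x - u| ≤ ε := by
    intro x hx
    exact happ x (by rcases List.mem_cons.mp hx with rfl | hx <;> simp [hx])
  have hQ := aux_right G' Q y₀ ε hε hsy₀Q hsG hsubQ happQ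
  cases hPe : P with
  | nil =>
    subst hPe
    simp only [List.nil_append]
    have hnn : 0 ≤ sumGaps (y₀ :: G') := sumGaps_nonneg hsG
    nlinarith
  | cons p₀ P' =>
    subst hPe
    -- left part: p₀ :: P' ++ [y₀], all within [y₀ - ε, y₀]
    have hsL : (p₀ :: (P' ++ [y₀])).Pairwise (· < ·) := by
      rw [show p₀ :: (P' ++ [y₀]) = (p₀ :: P') ++ [y₀] by simp]
      exact List.pairwise_append.mpr ⟨hsP, List.pairwise_singleton _ _,
        fun u hu v hv => by simp at hv; subst hv; exact hcross u hu v (by simp)⟩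
    have hLle : ∀ x ∈ p₀ :: (P' ++ [y₀]), x ≤ y₀ := by
      intro x hx
      rcases List.mem_cons.mp hx with rfl | hx
      · exact (hcross x (by simp) y₀ (by simp)).le
      · rcases List.mem_append.mp hx with h | h
        · exact (hcross x (by simp [h]) y₀ (by simp)).le
        · simp at h; subst h; exact le_rfl
    have hp₀ : y₀ - p₀ ≤ ε := by
      obtain ⟨u, hu, hxu⟩ := happ p₀ (by simp)
      have hy₀u : y₀ ≤ u := sorted_head_le hsG hu
      have hp₀y₀ : p₀ < y₀ := hcross p₀ (by simp) y₀ (by simp)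
      have := abs_le.mp hxu
      linarith [this.1]
    have hsumL : sumGaps (p₀ :: (P' ++ [y₀])) ≤ ε / 2 := by
      have := sumGaps_le_half (P' ++ [y₀]) p₀ y₀ hsL hLle
      linarith
    have hsplit2 : sumGaps (p₀ :: (P' ++ y₀ :: Q)) =
        sumGaps (p₀ :: (P' ++ [y₀])) + sumGaps (y₀ :: Q) := sumGaps_split P' p₀ y₀ Q
    have : (p₀ :: P') ++ y₀ :: Q = p₀ :: (P' ++ y₀ :: Q) := by simp
    rw [this, hsplit2]
    linarith

namespace MagMat
open Matrix
variable {n : ℕ}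

def fpred (i : Fin n) : Fin n := ⟨(i:ℕ) - 1, Nat.lt_of_le_of_lt (Nat.sub_le _ _) i.isLt⟩

noncomputable def Lmat (x : Fin n → ℝ) : Matrix (Fin n) (Fin n) ℝ :=
  Matrix.of fun i j => if j ≤ i then Real.exp (x j - x i) else 0

noncomputable def Kmat (x : Fin n → ℝ) : Matrix (Fin n) (Fin n) ℝ :=
  Matrix.of fun i j =>
    if i = j then 1 else if (i:ℕ) = (j:ℕ) + 1 then -Real.exp (x j - x i) else 0

noncomputable def dvec (x : Fin n → ℝ) (i : Fin n) : ℝ :=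
  if (i:ℕ) = 0 then 1 else 1 - Real.exp (2 * (x (fpred i) - x i))

noncomputable def Amat (x : Fin n → ℝ) : Matrix (Fin n) (Fin n) ℝ :=
  Matrix.of fun i j => Real.exp (-|x i - x j|)

lemma Kdecomp (x : Fin n → ℝ) (i j : Fin n) :
    Kmat x i j = (if i = j then (1:ℝ) else 0) +
      (if (i:ℕ) = (j:ℕ) + 1 then -Real.exp (x j - x i) else 0) := by
  unfold Kmat
  by_cases h1 : i = j
  · have h2 : ¬ ((i:ℕ) = (j:ℕ) + 1) := by subst h1; omega
    simp [h1, h2]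
  · simp [h1]

lemma LK (x : Fin n → ℝ) : Lmat x * Kmat x = 1 := by
  ext i j
  rw [Matrix.mul_apply]
  simp only [Kdecomp, mul_add]
  rw [Finset.sum_add_distrib]
  have h1 : (∑ k, Lmat x i k * if k = j then (1:ℝ) else 0) = Lmat x i j := by
    rw [Finset.sum_congr rfl (fun k _ => by rw [mul_ite, mul_one, mul_zero])]
    exact Finset.sum_ite_eq' _ j _ |>.trans (by simp)
  rw [h1]
  by_cases hj : (j:ℕ) + 1 < n
  · set j1 : Fin n := ⟨(j:ℕ) + 1, hj⟩ with hj1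
    have h2 : (∑ k, Lmat x i k * if (k:ℕ) = (j:ℕ) + 1 then -Real.exp (x j - x k) else 0)
        = Lmat x i j1 * (if (j1:ℕ) = (j:ℕ) + 1 then -Real.exp (x j - x j1) else 0) := by
      apply Finset.sum_eq_single j1
      · intro k _ hk
        have : ¬ ((k:ℕ) = (j:ℕ) + 1) := by
          intro h; exact hk (Fin.ext (by simp [hj1, h]))
        simp [this]
      · intro h; exact absurd (Finset.mem_univ j1) h
    rw [if_pos (by simp [hj1])] at h2
    rw [h2]
    rcases lt_trichotomy i j with hij | hij | hij
    · have hL1 : Lmat x i j = 0 := by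
        unfold Lmat; simp [Matrix.of_apply, not_le.mpr hij]
      have hL2 : Lmat x i j1 = 0 := by
        have : ¬ (j1 ≤ i) := by
          rw [Fin.not_le]; rw [Fin.lt_def]; simp [hj1]; rw [Fin.lt_def] at hij; omega
        unfold Lmat; simp [Matrix.of_apply, this]
      rw [hL1, hL2, Matrix.one_apply_ne (by exact fun h => absurd h (ne_of_lt hij))]
      ring
    · subst hij
      have hL1 : Lmat x i i = 1 := by unfold Lmat; simp [Matrix.of_apply]
      have hL2 : Lmat x i j1 = 0 := by
        have : ¬ (j1 ≤ i) := by rw [Fin.not_le, Fin.lt_def]; simp [hj1]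
        unfold Lmat; simp [Matrix.of_apply, this]
      rw [hL1, hL2, Matrix.one_apply_eq]
      ring
    · have hji : j ≤ i := hij.le
      have hj1i : j1 ≤ i := by rw [Fin.le_def]; simp [hj1]; rw [Fin.lt_def] at hij; omega
      have hL1 : Lmat x i j = Real.exp (x j - x i) := by
        unfold Lmat; simp [Matrix.of_apply, hji]
      have hL2 : Lmat x i j1 = Real.exp (x j1 - x i) := by
        unfold Lmat; simp [Matrix.of_apply, hj1i]
      rw [hL1, hL2, Matrix.one_apply_ne (by exact fun h => absurd h (ne_of_gt hij))]
      rw [mul_neg, ← Real.exp_add]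
      ring_nf
  · have h2 : (∑ k, Lmat x i k * if (k:ℕ) = (j:ℕ) + 1 then -Real.exp (x j - x k) else 0) = 0 := by
      apply Finset.sum_eq_zero
      intro k _
      have : ¬ ((k:ℕ) = (j:ℕ) + 1) := by have := k.isLt; omega
      simp [this]
    rw [h2]
    have hij : j ≤ i → i = j := by
      intro h
      have hi := i.isLt
      rw [Fin.le_def] at h
      exact Fin.ext (by omega)
    rcases le_or_gt j i with h | h
    · have := hij h
      subst this
      have hL1 : Lmat x i i = 1 := by unfold Lmat; simp [Matrix.of_apply]
      rw [hL1, Matrix.one_apply_eq]; ring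
    · have hL1 : Lmat x i j = 0 := by
        unfold Lmat; simp [Matrix.of_apply, not_le.mpr h]
      rw [hL1, Matrix.one_apply_ne (by exact fun hh => absurd hh (ne_of_lt h))]
      ring

lemma tel : ∀ (mv : ℕ) (x : Fin n → ℝ) (m : Fin n), (m : ℕ) = mv →
    (∑ k, if k ≤ m then Real.exp (2 * x k) * dvec x k else 0) = Real.exp (2 * x m) := by
  intro mv
  induction mv with
  | zero =>
    intro x m hm
    have h1 : ∀ k : Fin n, (if k ≤ m then Real.exp (2 * x k) * dvec x k else 0)
        = (if k = m then Real.exp (2 * x k) * dvec x k else 0) := by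
      intro k
      congr 1
      simp only [eq_iff_iff]
      rw [Fin.le_def, Fin.ext_iff]
      omega
    rw [Finset.sum_congr rfl (fun k _ => h1 k), Finset.sum_ite_eq' _ m _]
    simp [dvec, hm]
  | succ mv ih =>
    intro x m hm
    set m' := fpred m with hm'
    have hm'v : (m' : ℕ) = mv := by simp [hm', fpred, hm]
    have h1 : ∀ k : Fin n, (if k ≤ m then Real.exp (2 * x k) * dvec x k else 0)
        = (if k ≤ m' then Real.exp (2 * x k) * dvec x k else 0)
          + (if k = m then Real.exp (2 * x k) * dvec x k else 0) := by
      intro k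
      by_cases h2 : k ≤ m'
      · have h3 : k ≤ m := by rw [Fin.le_def] at h2 ⊢; omega
        have h4 : ¬ (k = m) := by
          rw [Fin.le_def] at h2; rw [Fin.ext_iff]; omega
        simp [h2, h3, h4]
      · by_cases h5 : k = m
        · have h7 : ¬ (m ≤ m') := by rw [Fin.le_def]; omega
          simp [h5, h7]
        · have h6 : ¬ (k ≤ m) := by
            rw [Fin.le_def] at h2 ⊢; rw [Fin.ext_iff] at h5; omega
          simp [h2, h5, h6]
    rw [Finset.sum_congr rfl (fun k _ => h1 k), Finset.sum_add_distrib,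
      ih x m' hm'v, Finset.sum_ite_eq' _ m _]
    simp only [Finset.mem_univ, if_true]
    have hd : dvec x m = 1 - Real.exp (2 * (x m' - x m)) := by
      unfold dvec
      rw [if_neg (by omega)]
    rw [hd]
    have : Real.exp (2 * x m) * Real.exp (2 * (x m' - x m)) = Real.exp (2 * x m') := by
      rw [← Real.exp_add]; ring_nf
    nlinarith [this]

lemma LDL (x : Fin n → ℝ) (hx : Monotone x) :
    Lmat x * Matrix.diagonal (dvec x) * (Lmat x)ᵀ = Amat x := by
  ext i j
  rw [Matrix.mul_assoc, Matrix.mul_apply]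
  have h1 : ∀ k, (Matrix.diagonal (dvec x) * (Lmat x)ᵀ) k j = dvec x k * Lmat x j k := by
    intro k
    rw [Matrix.diagonal_mul, Matrix.transpose_apply]
  simp only [h1]
  have h2 : ∀ k, Lmat x i k * (dvec x k * Lmat x j k)
      = (if k ≤ min i j then Real.exp (2 * x k) * dvec x k else 0) * Real.exp (-x i - x j) := by
    intro k
    unfold Lmat
    simp only [Matrix.of_apply]
    by_cases hki : k ≤ i <;> by_cases hkj : k ≤ j
    · rw [if_pos hki, if_pos hkj, if_pos (le_min hki hkj)]
      have e : Real.exp (x k - x i) * Real.exp (x k - x j)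
          = Real.exp (2 * x k) * Real.exp (-x i - x j) := by
        rw [← Real.exp_add, ← Real.exp_add]; ring_nf
      linear_combination dvec x k * e
    · rw [if_pos hki, if_neg hkj, if_neg (fun h => hkj (le_trans h (min_le_right i j)))]
      ring
    · rw [if_neg hki, if_neg (fun h => hki (le_trans h (min_le_left i j)))]
      ring
    · rw [if_neg hki, if_neg (fun h => hki (le_trans h (min_le_left i j)))]
      ring
  rw [Finset.sum_congr rfl (fun k _ => h2 k), ← Finset.sum_mul,
    tel (min i j : Fin n).val x _ rfl]
  unfold Amat
  rw [Matrix.of_apply, ← Real.exp_add]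
  congr 1
  rcases le_total i j with h | h
  · rw [min_eq_left h, abs_of_nonpos (by have := hx h; linarith)]
    ring
  · rw [min_eq_right h, abs_of_nonneg (by have := hx h; linarith)]
    ring

lemma dpos (x : Fin n → ℝ) (hx : StrictMono x) (i : Fin n) : 0 < dvec x i := by
  unfold dvec
  by_cases h : (i:ℕ) = 0
  · simp [h]
  · rw [if_neg h]
    have hlt : fpred i < i := by
      rw [Fin.lt_def]; simp [fpred]; omega
    have := hx hlt
    have : Real.exp (2 * (x (fpred i) - x i)) < 1 := by
      rw [Real.exp_lt_one_iff]; linarith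
    linarith

noncomputable def dinv (x : Fin n → ℝ) (i : Fin n) : ℝ := (dvec x i)⁻¹

noncomputable def Mmat (x : Fin n → ℝ) : Matrix (Fin n) (Fin n) ℝ :=
  (Kmat x)ᵀ * Matrix.diagonal (dinv x) * Kmat x

lemma DDinv (x : Fin n → ℝ) (hx : StrictMono x) :
    Matrix.diagonal (dvec x) * Matrix.diagonal (dinv x) = 1 := by
  rw [Matrix.diagonal_mul_diagonal]
  have : (fun i => dvec x i * dinv x i) = fun _ => (1:ℝ) :=
    funext fun i => mul_inv_cancel₀ (dpos x hx i).ne'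
  rw [this, Matrix.diagonal_one]

lemma AM (x : Fin n → ℝ) (hx : StrictMono x) : Amat x * Mmat x = 1 := by
  have hLK := LK x
  have hKL : Kmat x * Lmat x = 1 := mul_eq_one_comm.mp hLK
  have hLtKt : (Lmat x)ᵀ * (Kmat x)ᵀ = 1 := by
    rw [← Matrix.transpose_mul, hKL, Matrix.transpose_one]
  rw [← LDL x hx.monotone]
  rw [Mmat]
  calc Lmat x * Matrix.diagonal (dvec x) * (Lmat x)ᵀ *
        ((Kmat x)ᵀ * Matrix.diagonal (dinv x) * Kmat x)
      = Lmat x * Matrix.diagonal (dvec x) * ((Lmat x)ᵀ * (Kmat x)ᵀ) *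
        (Matrix.diagonal (dinv x) * Kmat x) := by
        simp only [Matrix.mul_assoc]
    _ = Lmat x * (Matrix.diagonal (dvec x) * Matrix.diagonal (dinv x)) * Kmat x := by
        rw [hLtKt, Matrix.mul_one]
        simp only [Matrix.mul_assoc]
    _ = Lmat x * Kmat x := by rw [DDinv x hx, Matrix.mul_one]
    _ = 1 := hLK

lemma Ainv (x : Fin n → ℝ) (hx : StrictMono x) : (Amat x)⁻¹ = Mmat x :=
  Matrix.inv_eq_right_inv (AM x hx)

lemma rowsumK (x : Fin n → ℝ) (k : Fin n) :
    (∑ j : Fin n, Kmat x k j) =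
      if (k:ℕ) = 0 then 1 else 1 - Real.exp (x (fpred k) - x k) := by
  simp only [Kdecomp]
  rw [Finset.sum_add_distrib]
  have h1 : (∑ j : Fin n, if k = j then (1:ℝ) else 0) = 1 := by
    rw [Finset.sum_ite_eq _ k _]; simp
  rw [h1]
  by_cases hk : (k:ℕ) = 0
  · have h2 : (∑ j : Fin n, if (k:ℕ) = (j:ℕ) + 1 then -Real.exp (x j - x k) else 0) = 0 := by
      apply Finset.sum_eq_zero
      intro j _
      rw [if_neg (by omega)]
    rw [h2, if_pos hk]
    ring
  · have hkp : (fpred k : ℕ) = (k:ℕ) - 1 := rfl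
    have h2 : (∑ j : Fin n, if (k:ℕ) = (j:ℕ) + 1 then -Real.exp (x j - x k) else 0)
        = (if (k:ℕ) = ((fpred k):ℕ) + 1 then -Real.exp (x (fpred k) - x k) else 0) := by
      apply Finset.sum_eq_single (fpred k)
      · intro j _ hj
        rw [if_neg (fun h => hj (Fin.ext (by omega)))]
      · intro h; exact absurd (Finset.mem_univ _) h
    rw [h2, if_pos (by omega), if_neg hk]
    ring

lemma sumM (x : Fin n → ℝ) (hx : StrictMono x) :
    (∑ i, ∑ j, Mmat x i j) =
      ∑ k : Fin n, (if (k:ℕ) = 0 then (1:ℝ) else gg (x k - x (fpred k))) := by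
  have hM : ∀ i j, Mmat x i j = ∑ k : Fin n, dinv x k * Kmat x k i * Kmat x k j := by
    intro i j
    rw [Mmat, Matrix.mul_assoc, Matrix.mul_apply]
    apply Finset.sum_congr rfl
    intro k _
    rw [Matrix.transpose_apply, Matrix.diagonal_mul]
    ring
  calc (∑ i, ∑ j, Mmat x i j)
      = ∑ i : Fin n, ∑ j : Fin n, ∑ k : Fin n, dinv x k * Kmat x k i * Kmat x k j := by
        apply Finset.sum_congr rfl; intro i _
        apply Finset.sum_congr rfl; intro j _
        exact hM i j
    _ = ∑ i : Fin n, ∑ k : Fin n, ∑ j : Fin n, dinv x k * Kmat x k i * Kmat x k j := by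
        apply Finset.sum_congr rfl; intro i _
        exact Finset.sum_comm
    _ = ∑ k : Fin n, ∑ i : Fin n, ∑ j : Fin n, dinv x k * Kmat x k i * Kmat x k j :=
        Finset.sum_comm
    _ = ∑ k : Fin n, dinv x k * (∑ i : Fin n, Kmat x k i) * (∑ j : Fin n, Kmat x k j) := by
        apply Finset.sum_congr rfl; intro k _
        have e1 : ∀ i : Fin n, (∑ j : Fin n, dinv x k * Kmat x k i * Kmat x k j)
            = dinv x k * Kmat x k i * (∑ j : Fin n, Kmat x k j) :=
          fun i => (Finset.mul_sum _ _ _).symm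
        rw [Finset.sum_congr rfl (fun i _ => e1 i), ← Finset.sum_mul, ← Finset.mul_sum]
    _ = ∑ k : Fin n, (if (k:ℕ) = 0 then (1:ℝ) else gg (x k - x (fpred k))) := by
        apply Finset.sum_congr rfl; intro k _
        rw [rowsumK]
        by_cases hk : (k:ℕ) = 0
        · rw [if_pos hk, if_pos hk]
          have : dvec x k = 1 := by rw [dvec, if_pos hk]
          rw [dinv, this]
          norm_num
        · rw [if_neg hk, if_neg hk]
          have hpk : fpred k < k := by rw [Fin.lt_def]; simp [fpred]; omega
          have hxpk : x (fpred k) < x k := hx hpk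
          set q := Real.exp (x (fpred k) - x k) with hq
          have hq0 : 0 < q := Real.exp_pos _
          have hq1 : q < 1 := by rw [hq, Real.exp_lt_one_iff]; linarith
          have hq2 : q^2 = Real.exp (2 * (x (fpred k) - x k)) := by
            rw [hq, sq, ← Real.exp_add]; ring_nf
          have hd : dvec x k = 1 - q^2 := by
            rw [dvec, if_neg hk, ← hq2]
          have hgg : gg (x k - x (fpred k)) = (1 - q) / (1 + q) := by
            simp only [gg]
            congr 2 <;> rw [hq] <;> congr 1 <;> ring
          rw [dinv, hd, hgg]
          have h1q : (1:ℝ) - q ≠ 0 := by linarith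
          have h1q2 : (1:ℝ) + q ≠ 0 := by linarith
          have h1q3 : (1:ℝ) - q^2 ≠ 0 := by nlinarith
          field_simp
          ring
end MagMat

noncomputable def mgL (l : List ℝ) : ℝ := if l = [] then 0 else 1 + sumGaps l

lemma sumGaps_ofFn : ∀ (m : ℕ) (x : Fin (m+1) → ℝ),
    sumGaps (List.ofFn x) = ∑ i : Fin m, gg (x i.succ - x i.castSucc) := by
  intro m
  induction m with
  | zero => intro x; simp [sumGaps]
  | succ k ih =>
    intro x
    rw [List.ofFn_succ, List.ofFn_succ]
    have h1 : sumGaps (x 0 :: x (0:Fin (k+1)).succ ::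
        List.ofFn (fun i : Fin k => x i.succ.succ)) =
        gg (x (0:Fin (k+1)).succ - x 0) + sumGaps (x (0:Fin (k+1)).succ ::
        List.ofFn (fun i : Fin k => x i.succ.succ)) := rfl
    rw [h1]
    have h2 : (x (0:Fin (k+1)).succ :: List.ofFn (fun i : Fin k => x i.succ.succ))
        = List.ofFn (fun i : Fin (k+1) => x i.succ) := by
      rw [List.ofFn_succ]
    rw [h2, ih (fun i => x i.succ)]
    have goalr : ∑ i : Fin (k+1), gg (x i.succ - x i.castSucc)
        = gg (x (0:Fin (k+1)).succ - x 0) +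
          ∑ i : Fin k, gg (x i.succ.succ - x i.castSucc.succ) := by
      rw [Fin.sum_univ_succ]
      congr 1
    rw [goalr]

theorem sum_formula_eq_mgL {n : ℕ} (x : Fin n → ℝ) :
    (∑ k : Fin n, (if (k:ℕ) = 0 then (1:ℝ) else gg (x k - x (MagMat.fpred k))))
      = mgL (List.ofFn x) := by
  cases n with
  | zero => simp [mgL]
  | succ m =>
    rw [Fin.sum_univ_succ]
    rw [if_pos (show ((0:Fin (m+1)):ℕ) = 0 from rfl)]
    have h1 : ∀ i : Fin m, (if ((i.succ : Fin (m+1)):ℕ) = 0 then (1:ℝ)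
        else gg (x i.succ - x (MagMat.fpred i.succ)))
        = gg (x i.succ - x i.castSucc) := by
      intro i
      rw [if_neg (by simp)]
      congr 2
    rw [Finset.sum_congr rfl (fun i _ => h1 i)]
    rw [mgL, if_neg (by simp), sumGaps_ofFn m x]

end MagProof

section Bridge
open Real List MagMat

theorem sum_inv_simMatrix {p : Set ℝ} [DecidableEq ↥p] (s : Finset ↥p) :
    ∑ i, ∑ j, (simMatrix s)⁻¹ i j = mgL ((s.sort (· ≤ ·)).map Subtype.val) := by
  set l := s.sort (· ≤ ·) with hl
  set n := l.length with hn
  have hsl : l.Pairwise (· < ·) := (Finset.sortedLT_sort s).pairwise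
  have hget : StrictMono l.get := hsl.sortedLT.strictMono_get
  set xs : Fin n → ℝ := fun i => ((l.get i : ↥p) : ℝ) with hxs
  have hx : StrictMono xs := fun i j hij => Subtype.coe_lt_coe.mpr (hget hij)
  have hmem : ∀ i : Fin n, l.get i ∈ s := fun i =>
    (Finset.mem_sort _).mp (l.get_mem i)
  have hinj : Function.Injective (fun i : Fin n => (⟨l.get i, hmem i⟩ : {x // x ∈ s})) := by
    intro i j hij
    exact hget.injective (congrArg Subtype.val hij)
  have hcard : Fintype.card {x // x ∈ s} = n := by
    rw [Fintype.card_coe, hn, hl, Finset.length_sort]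
  have hbij : Function.Bijective (fun i : Fin n => (⟨l.get i, hmem i⟩ : {x // x ∈ s})) :=
    (Fintype.bijective_iff_injective_and_card _).mpr
      ⟨hinj, by rw [Fintype.card_fin, hcard]⟩
  set e : Fin n ≃ {x // x ∈ s} := Equiv.ofBijective _ hbij with he_def
  have he : ∀ i, ((e i : ↥p) : ℝ) = xs i := fun i => rfl
  have hsub : (simMatrix s).submatrix ⇑e ⇑e = Amat xs := by
    ext i j
    simp only [Matrix.submatrix_apply, simMatrix, Amat, Matrix.of_apply]
    congr 1
  have h1 : ((simMatrix s).submatrix ⇑e ⇑e)⁻¹ = ((simMatrix s)⁻¹).submatrix ⇑e ⇑e := by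
    have h2 := Matrix.inv_reindex e.symm e.symm (simMatrix s)
    simpa [Matrix.reindex_apply] using h2
  have h3 : (Amat xs)⁻¹ = ((simMatrix s)⁻¹).submatrix ⇑e ⇑e := by rw [← hsub, h1]
  have h4 : ∑ i, ∑ j, (simMatrix s)⁻¹ i j = ∑ i : Fin n, ∑ j : Fin n, (Amat xs)⁻¹ i j := by
    rw [← Equiv.sum_comp e (fun i => ∑ j, (simMatrix s)⁻¹ i j)]
    apply Finset.sum_congr rfl
    intro i _
    rw [← Equiv.sum_comp e (fun j => (simMatrix s)⁻¹ (e i) j)]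
    apply Finset.sum_congr rfl
    intro j _
    rw [h3, Matrix.submatrix_apply]
  rw [h4, Ainv xs hx, sumM xs hx, sum_formula_eq_mgL xs]
  congr 1
  have : List.ofFn xs = l.map Subtype.val := by
    rw [hxs]
    have : (fun i => ((l.get i : ↥p) : ℝ)) = Subtype.val ∘ l.get := rfl
    rw [this, ← List.map_ofFn, List.ofFn_get]
  rw [this]

theorem finMag_eq {p : Set ℝ} (s : Finset ↥p) :
    finMag s = mgL ((s.sort (· ≤ ·)).map Subtype.val) := by
  unfold finMag
  exact @sum_inv_simMatrix p (Classical.decEq ↥p) s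

end Bridge

section Final
open Real List MagMat Metric

variable {a b : ℝ}

noncomputable def rl (s : Finset ↥(Set.Icc a b)) : List ℝ :=
  (s.sort (· ≤ ·)).map Subtype.val

lemma rl_sorted (s : Finset ↥(Set.Icc a b)) : (rl s).Pairwise (· < ·) := by
  apply List.Pairwise.map Subtype.val
  · intro u v huv
    exact_mod_cast huv
  · exact (Finset.sortedLT_sort s).pairwise

lemma mem_rl {s : Finset ↥(Set.Icc a b)} {x : ℝ} :
    x ∈ rl s ↔ ∃ u : ↥(Set.Icc a b), u ∈ s ∧ (u : ℝ) = x := by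
  unfold rl
  rw [List.mem_map]
  constructor
  · rintro ⟨u, hu, hux⟩; exact ⟨u, (Finset.mem_sort _).mp hu, hux⟩
  · rintro ⟨u, hu, hux⟩; exact ⟨u, (Finset.mem_sort _).mpr hu, hux⟩

lemma rl_eq_nil {s : Finset ↥(Set.Icc a b)} : rl s = [] ↔ s = ∅ := by
  constructor
  · intro h
    by_contra hne
    obtain ⟨u, hu⟩ := Finset.nonempty_of_ne_empty hne
    have : (u : ℝ) ∈ rl s := mem_rl.mpr ⟨u, hu, rfl⟩
    rw [h] at this
    exact absurd this (List.not_mem_nil)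
  · intro h; subst h; simp [rl]

lemma finMag_eq_rl (s : Finset ↥(Set.Icc a b)) : finMag s = mgL (rl s) := finMag_eq s

lemma sumGaps_rl_le (hab : a < b) (s : Finset ↥(Set.Icc a b)) :
    sumGaps (rl s) ≤ (b - a) / 2 := by
  cases h : rl s with
  | nil => simp; linarith
  | cons c t =>
    have hs : (c :: t).Pairwise (· < ·) := h ▸ rl_sorted s
    have hM : ∀ x ∈ c :: t, x ≤ b := by
      intro x hx
      obtain ⟨u, _, hux⟩ := mem_rl.mp (h ▸ hx)
      have := u.2.2
      linarith
    have hc : a ≤ c := by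
      obtain ⟨u, _, hux⟩ := mem_rl.mp (h ▸ (List.mem_cons_self : c ∈ c :: t))
      have := u.2.1
      linarith
    have := sumGaps_le_half t c b hs hM
    linarith

lemma finMag_nonneg' (s : Finset ↥(Set.Icc a b)) : 0 ≤ finMag s := by
  rw [finMag_eq_rl, mgL]
  split_ifs with h
  · exact le_rfl
  · have : 0 ≤ sumGaps (rl s) := sumGaps_nonneg (rl_sorted s)
    linarith

lemma finMag_le_C (hab : a < b) (s : Finset ↥(Set.Icc a b)) :
    finMag s ≤ 1 + (b - a) / 2 := by
  rw [finMag_eq_rl, mgL]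
  split_ifs with h
  · linarith
  · have := sumGaps_rl_le hab s
    linarith

lemma cMagE_ne_top (hab : a < b) (K : Set ↥(Set.Icc a b)) : cMagE K ≠ ⊤ := by
  have h1 : cMagE K ≤ ENNReal.ofReal (1 + (b - a) / 2) := by
    apply iSup₂_le
    intro s _
    exact ENNReal.ofReal_le_ofReal (finMag_le_C hab s)
  exact ne_top_of_le_ne_top ENNReal.ofReal_ne_top h1

lemma le_cMag (hab : a < b) {s : Finset ↥(Set.Icc a b)} {K : Set ↥(Set.Icc a b)}
    (h : (s : Set ↥(Set.Icc a b)) ⊆ K) : finMag s ≤ cMag K := by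
  have h1 : ENNReal.ofReal (finMag s) ≤ cMagE K := by
    apply le_iSup₂_of_le s h
    exact le_rfl
  have h2 := ENNReal.toReal_mono (cMagE_ne_top hab K) h1
  rwa [ENNReal.toReal_ofReal (finMag_nonneg' s)] at h2

lemma cMag_le_of_forall (hab : a < b) {K : Set ↥(Set.Icc a b)} {c : ℝ} (hc : 0 ≤ c)
    (h : ∀ s : Finset ↥(Set.Icc a b), (s : Set ↥(Set.Icc a b)) ⊆ K → finMag s ≤ c) :
    cMag K ≤ c := by
  have h1 : cMagE K ≤ ENNReal.ofReal c := by
    apply iSup₂_le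
    intro s hs
    exact ENNReal.ofReal_le_ofReal (h s hs)
  have h2 := ENNReal.toReal_mono ENNReal.ofReal_ne_top h1
  rwa [ENNReal.toReal_ofReal hc] at h2

lemma finMag_mono {s t : Finset ↥(Set.Icc a b)} (hst : s ⊆ t) : finMag s ≤ finMag t := by
  rw [finMag_eq_rl, finMag_eq_rl]
  have hsub : ∀ x ∈ rl s, x ∈ rl t := by
    intro x hx
    obtain ⟨u, hu, hux⟩ := mem_rl.mp hx
    exact mem_rl.mpr ⟨u, hst hu, hux⟩
  unfold mgL
  split_ifs with h1 h2 h3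
  · exact le_rfl
  · have : 0 ≤ sumGaps (rl t) := sumGaps_nonneg (rl_sorted t)
    linarith
  · exfalso
    rw [rl_eq_nil] at h3
    subst h3
    have := hsub
    cases hrl : rl s with
    | nil => exact h1 hrl
    | cons c l =>
      have hc := hsub c (hrl ▸ (List.mem_cons_self : c ∈ c :: l))
      rw [show rl (∅ : Finset ↥(Set.Icc a b)) = [] from rl_eq_nil.mpr rfl] at hc
      exact absurd hc (List.not_mem_nil)
  · have := sumGaps_mono (rl t) (rl s) (rl_sorted t) (rl_sorted s) hsub
    linarith

lemma cMag_est (hab : a < b) (K L : TopologicalSpace.NonemptyCompacts ↥(Set.Icc a b)) :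
    cMag (K : Set ↥(Set.Icc a b)) ≤ cMag (L : Set ↥(Set.Icc a b))
      + (1 + (b - a) / 2) * dist K L := by
  classical
  set X := ↥(Set.Icc a b)
  set ε := dist K L with hε_def
  have hε : 0 ≤ ε := dist_nonneg
  have hC0 : (0:ℝ) ≤ 1 + (b - a) / 2 := by linarith
  have hLnn : 0 ≤ cMag (L : Set X) := ENNReal.toReal_nonneg
  apply cMag_le_of_forall hab (by positivity)
  intro F hF
  rcases F.eq_empty_or_nonempty with rfl | hFne
  · have : finMag (∅ : Finset X) = 0 := by
      rw [finMag_eq_rl, mgL, if_pos (rl_eq_nil.mpr rfl)]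
    rw [this]
    positivity
  · have hdH : ε = Metric.hausdorffDist (K : Set X) (L : Set X) := rfl
    have hEd : EMetric.hausdorffEdist (K : Set X) (L : Set X) ≠ ⊤ :=
      Metric.hausdorffEdist_ne_top_of_nonempty_of_bounded K.nonempty L.nonempty
        K.isCompact.isBounded L.isCompact.isBounded
    have hpick_ex : ∀ x ∈ (K : Set X), ∃ y, y ∈ (L : Set X) ∧ dist x y ≤ ε := by
      intro x hx
      have h1 : Metric.infDist x (L : Set X) ≤ Metric.hausdorffDist (K : Set X) (L : Set X) :=
        Metric.infDist_le_hausdorffDist_of_mem hx hEd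
      obtain ⟨y, hy, hyd⟩ := L.isCompact.exists_infDist_eq_dist L.nonempty x
      exact ⟨y, hy, by rw [← hyd, hdH]; exact h1⟩
    set pickf : X → X := fun x =>
      if h : ∃ y, y ∈ (L : Set X) ∧ dist x y ≤ ε then h.choose else L.nonempty.some
      with hpickf
    have hpick : ∀ x ∈ (K : Set X), pickf x ∈ (L : Set X) ∧ dist x (pickf x) ≤ ε := by
      intro x hx
      have hex := hpick_ex x hx
      rw [hpickf]
      simp only [dif_pos hex]
      exact hex.choose_spec
    set G : Finset X := F.image pickf with hG
    set H : Finset X := F ∪ G with hH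
    have hGL : (G : Set X) ⊆ (L : Set X) := by
      intro x hx
      rw [hG] at hx
      simp only [Finset.coe_image, Set.mem_image, Finset.mem_coe] at hx
      obtain ⟨w, hw, rfl⟩ := hx
      exact (hpick w (hF hw)).1
    have hFH : F ⊆ H := Finset.subset_union_left
    have hGH : G ⊆ H := Finset.subset_union_right
    have hGne : G.Nonempty := hFne.image pickf
    have hHne : H.Nonempty := hFne.mono hFH
    -- apply main inequality
    have hsubl : ∀ z ∈ rl G, z ∈ rl H := by
      intro z hz
      obtain ⟨u, hu, huz⟩ := mem_rl.mp hz
      exact mem_rl.mpr ⟨u, hGH hu, huz⟩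
    have happ : ∀ x ∈ rl H, ∃ u ∈ rl G, |x - u| ≤ ε := by
      intro x hx
      obtain ⟨u, hu, rfl⟩ := mem_rl.mp hx
      rw [hH] at hu
      rcases Finset.mem_union.mp hu with huF | huG
      · refine ⟨((pickf u : X) : ℝ), mem_rl.mpr ⟨pickf u, Finset.mem_image_of_mem _ huF, rfl⟩, ?_⟩
        have h2 := (hpick u (hF huF)).2
        rw [Subtype.dist_eq, Real.dist_eq] at h2
        exact h2
      · exact ⟨(u : ℝ), mem_rl.mpr ⟨u, huG, rfl⟩, by simp [hε]⟩
    have hGnil : rl G ≠ [] := fun hnil =>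
      (Finset.nonempty_iff_ne_empty.mp hGne) (rl_eq_nil.mp hnil)
    have hmain := main_ineq (rl G) (rl H) ε hε (rl_sorted H) (rl_sorted G) hGnil hsubl happ
    have hsg : sumGaps (rl G) ≤ (b - a) / 2 := sumGaps_rl_le hab G
    have h3 : finMag F ≤ finMag H := finMag_mono hFH
    have h4 : finMag H = 1 + sumGaps (rl H) := by
      rw [finMag_eq_rl, mgL, if_neg (fun hnil =>
        (Finset.nonempty_iff_ne_empty.mp hHne) (rl_eq_nil.mp hnil))]
    have h5 : finMag G = 1 + sumGaps (rl G) := by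
      rw [finMag_eq_rl, mgL, if_neg hGnil]
    have h6 : finMag G ≤ cMag (L : Set X) := le_cMag hab hGL
    have h7 : sumGaps (rl H) ≤ sumGaps (rl G) + ε * (1 + (b - a) / 2) := by
      nlinarith
    calc finMag F ≤ finMag H := h3
      _ = 1 + sumGaps (rl H) := h4
      _ ≤ 1 + sumGaps (rl G) + ε * (1 + (b - a) / 2) := by linarith
      _ = finMag G + (1 + (b - a) / 2) * ε := by rw [h5]; ring
      _ ≤ cMag (L : Set X) + (1 + (b - a) / 2) * ε := by linarith

end Final

/-- For `a < b`, the magnitude maps on nonempty compact subsets and on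
nonempty finite subsets of `[a, b]` (with the Hausdorff metric) are Lipschitz with
constant `1 + (b − a)/2`. -/
theorem stmt_19 (a b : ℝ) (hab : a < b) :
    LipschitzWith (Real.toNNReal (1 + (b - a) / 2))
      (fun K : NonemptyCompacts (Set.Icc a b) => cMag (K : Set (Set.Icc a b))) ∧
    LipschitzWith (Real.toNNReal (1 + (b - a) / 2))
      (fun F : {K : NonemptyCompacts (Set.Icc a b) // (K : Set (Set.Icc a b)).Finite} =>
        cMag ((F : NonemptyCompacts (Set.Icc a b)) : Set (Set.Icc a b))) := by
  have hC0 : (0:ℝ) ≤ 1 + (b - a) / 2 := by linarith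
  have h1 : LipschitzWith (Real.toNNReal (1 + (b - a) / 2))
      (fun K : NonemptyCompacts (Set.Icc a b) => cMag (K : Set (Set.Icc a b))) := by
    apply LipschitzWith.of_dist_le_mul
    intro K L
    rw [Real.coe_toNNReal _ hC0, Real.dist_eq, abs_sub_le_iff]
    constructor
    · have := cMag_est hab K L
      linarith
    · have := cMag_est hab L K
      rw [dist_comm] at this
      linarith
  refine ⟨h1, ?_⟩
  have h2 := h1.comp (LipschitzWith.subtype_val
    {K : NonemptyCompacts (Set.Icc a b) | (K : Set (Set.Icc a b)).Finite})
  rw [mul_one] at h2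
  exact h2
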